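/- Graded Möbius inversion for trace monoids: let F : M → ℝ be any function on the trace monoid M = M(Σ, I), and define its graded Möbius transform H : M → ℝ by H(u) = Σ_{c' clique, c' ≥ c} (-1)^{|c'|-|c|} F(v·c'), where u = v·c with c the last clique of the Cartier-Foata decomposition of u (and H(0) = Σ_{c clique} (-1)^{|c|} F(c)). Then for every u ∈ M, F(u) = Σ_{x ∈ M(u)} H(x), where M(u) = {x ∈ M : τ(x) = τ(u) and u ≤ x} for u ≠ 0, and M(0) is the set of cliques. -/

import Mathlib

open scoped Classical

/-- A clique of the independence graph `(Σ, I)`. -/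
def IsCliq {α : Type*} (I : α → α → Prop) (c : Finset α) : Prop :=
  ∀ a ∈ c, ∀ b ∈ c, a ≠ b → I a b

/-- Cartier–Foata admissibility `c → c'`. -/
def CFadm {α : Type*} (I : α → α → Prop) (c c' : Finset α) : Prop :=
  ∀ b ∈ c', ∃ a ∈ c, ¬ I a b

/-- Parallelism of cliques `c ∥ c'`, i.e. `c × c' ⊆ I`. -/
def Par {α : Type*} (I : α → α → Prop) (c c' : Finset α) : Prop :=
  ∀ a ∈ c, ∀ b ∈ c', I a b

/-- The commutation relation `ab = ba` for `(a,b) ∈ I`, generating the trace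
monoid congruence on the free monoid. -/
def traceRel {α : Type*} (I : α → α → Prop) : FreeMonoid α → FreeMonoid α → Prop :=
  fun x y => ∃ a b, I a b ∧ x = FreeMonoid.of a * FreeMonoid.of b ∧
    y = FreeMonoid.of b * FreeMonoid.of a

/-- The trace monoid `M(Σ, I) = Σ* / R`. -/
abbrev TM {α : Type*} (I : α → α → Prop) := Con.Quotient (conGen (traceRel I))

/-- Canonical projection from the free monoid onto the trace monoid. -/
def mkTM {α : Type*} (I : α → α → Prop) : FreeMonoid α →* TM I := Con.mk' _

/-- The image of a letter in the trace monoid. -/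
def emb {α : Type*} (I : α → α → Prop) (a : α) : TM I := mkTM I (FreeMonoid.of a)

/-- The trace associated to a clique (product of its letters in some enumeration). -/
noncomputable def ctr {α : Type*} (I : α → α → Prop) (c : Finset α) : TM I :=
  mkTM I ((c.toList.map FreeMonoid.of).prod)

/-- The prefix (left divisibility) order on traces: `u ≤ v ↔ ∃ w, v = u·w`. -/
def pref {α : Type*} (I : α → α → Prop) (u v : TM I) : Prop := ∃ w, v = u * w

namespace MobAux

variable {α : Type*} (I : α → α → Prop)

/-- product of letters of a list in the trace monoid -/
noncomputable def PL (l : List α) : TM I := (l.map (emb I)).prod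

noncomputable def Pc (l : List (Finset α)) : TM I := (l.map (ctr I)).prod

variable {I}

@[simp] lemma PL_nil : PL I ([] : List α) = 1 := rfl
@[simp] lemma PL_cons (a : α) (l : List α) : PL I (a :: l) = emb I a * PL I l := by
  simp [PL]
lemma PL_append (l₁ l₂ : List α) : PL I (l₁ ++ l₂) = PL I l₁ * PL I l₂ := by
  simp [PL]

@[simp] lemma Pc_nil : Pc I ([] : List (Finset α)) = 1 := rfl
@[simp] lemma Pc_cons (c : Finset α) (l : List (Finset α)) :
    Pc I (c :: l) = ctr I c * Pc I l := by simp [Pc]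
lemma Pc_append (l₁ l₂ : List (Finset α)) : Pc I (l₁ ++ l₂) = Pc I l₁ * Pc I l₂ := by
  simp [Pc]

lemma emb_comm {a b : α} (h : I a b) : emb I a * emb I b = emb I b * emb I a := by
  show mkTM I (FreeMonoid.of a) * mkTM I (FreeMonoid.of b)
      = mkTM I (FreeMonoid.of b) * mkTM I (FreeMonoid.of a)
  rw [← map_mul, ← map_mul]
  exact (Con.eq _).mpr (ConGen.Rel.of _ _ ⟨a, b, h, rfl, rfl⟩)

lemma PL_comm_letter {l : List α} {b : α} (h : ∀ a ∈ l, I a b) :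
    PL I l * emb I b = emb I b * PL I l := by
  induction l with
  | nil => simp
  | cons a t ih =>
    have ha : I a b := h a (by simp)
    rw [PL_cons, mul_assoc, ih (fun x hx => h x (by simp [hx])), ← mul_assoc,
      emb_comm ha, mul_assoc]

lemma PL_comm_list {l₁ l₂ : List α} (h : ∀ a ∈ l₁, ∀ b ∈ l₂, I a b) :
    PL I l₁ * PL I l₂ = PL I l₂ * PL I l₁ := by
  induction l₂ with
  | nil => simp
  | cons b t ih =>
    rw [PL_cons, ← mul_assoc, PL_comm_letter (fun a ha => h a ha b (by simp)),
      mul_assoc, ih (fun a ha c hc => h a ha c (by simp [hc])), ← mul_assoc]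

lemma PL_perm {l l' : List α} (hp : l.Perm l')
    (h : ∀ a ∈ l, ∀ b ∈ l, a ≠ b → I a b) : PL I l = PL I l' := by
  induction hp with
  | nil => rfl
  | cons a _ ih =>
    rw [PL_cons, PL_cons, ih]
    intro x hx y hy hxy; exact h x (by simp [hx]) y (by simp [hy]) hxy
  | swap a b t =>
    by_cases hab : b = a
    · subst hab; rfl
    · have : I b a := h b (by simp) a (by simp) hab
      rw [PL_cons, PL_cons, PL_cons, PL_cons, ← mul_assoc, ← mul_assoc, emb_comm this]
  | trans h1 h2 ih1 ih2 =>
    rw [ih1 h, ih2]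
    intro x hx y hy hxy
    exact h x (h1.mem_iff.mpr hx) y (h1.mem_iff.mpr hy) hxy

lemma ctr_eq_PL (c : Finset α) : ctr I c = PL I c.toList := by
  show mkTM I _ = _
  rw [map_list_prod, List.map_map]; rfl

@[simp] lemma ctr_empty : ctr I (∅ : Finset α) = 1 := by simp [ctr_eq_PL]

@[simp] lemma ctr_singleton (a : α) : ctr I ({a} : Finset α) = emb I a := by
  simp [ctr_eq_PL, Finset.toList_singleton]

lemma cliq_subset {c d : Finset α} (hd : IsCliq I d) (h : c ⊆ d) : IsCliq I c :=
  fun a ha b hb hab => hd a (h ha) b (h hb) hab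

lemma ctr_insert {a : α} {c : Finset α} (ha : a ∉ c) (hc : IsCliq I (insert a c)) :
    ctr I (insert a c) = emb I a * ctr I c := by
  rw [ctr_eq_PL, ctr_eq_PL, PL_perm (Finset.toList_insert ha)
    (by intro x hx y hy hxy
        exact hc x (by simpa using Finset.mem_toList.mp hx) y
          (by simpa using Finset.mem_toList.mp hy) hxy)]
  simp

lemma ctr_union {s t : Finset α} : Disjoint s t → IsCliq I (s ∪ t) →
    ctr I (s ∪ t) = ctr I s * ctr I t := by
  classical
  induction s using Finset.induction_on with
  | empty => simp
  | @insert a s ha ih =>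
    intro hdisj h
    have hat : a ∉ s ∪ t := by
      simp only [Finset.mem_union, not_or]
      exact ⟨ha, (Finset.disjoint_left.mp hdisj) (by simp)⟩
    have h1 : insert a s ∪ t = insert a (s ∪ t) := by
      ext x; simp [or_assoc]
    have h2 : IsCliq I (insert a (s ∪ t)) := by rwa [h1] at h
    have hsub : s ∪ t ⊆ insert a (s ∪ t) := Finset.subset_insert _ _
    rw [h1, ctr_insert hat h2,
      ih (hdisj.mono_left (Finset.subset_insert _ _)) (cliq_subset h2 hsub),
      ctr_insert ha (cliq_subset h2 (by
        intro x hx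
        rcases Finset.mem_insert.mp hx with h3 | h3
        · simp [h3]
        · exact Finset.mem_insert_of_mem (Finset.mem_union_left _ h3))), mul_assoc]

lemma par_comm_ctr {s t : Finset α} (h : Par I s t) :
    ctr I s * ctr I t = ctr I t * ctr I s := by
  rw [ctr_eq_PL, ctr_eq_PL]
  exact PL_comm_list (fun a ha b hb =>
    h a (Finset.mem_toList.mp ha) b (Finset.mem_toList.mp hb))

lemma par_mono {s t s' t' : Finset α} (h : Par I s t) (hs : s' ⊆ s) (ht : t' ⊆ t) :
    Par I s' t' := fun a ha b hb => h a (hs ha) b (ht hb)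

lemma par_union_right {s t u : Finset α} :
    Par I s (t ∪ u) ↔ Par I s t ∧ Par I s u := by
  constructor
  · intro h
    exact ⟨par_mono h subset_rfl Finset.subset_union_left,
      par_mono h subset_rfl Finset.subset_union_right⟩
  · rintro ⟨h1, h2⟩ a ha b hb
    rcases Finset.mem_union.mp hb with hb | hb
    · exact h1 a ha b hb
    · exact h2 a ha b hb

@[simp] lemma par_empty_right (s : Finset α) : Par I s (∅ : Finset α) := by
  intro a _ b hb; simp at hb

@[simp] lemma par_empty_left (s : Finset α) : Par I (∅ : Finset α) s := by
  intro a ha; simp at ha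

lemma par_disjoint (hirr : ∀ a, ¬ I a a) {s t : Finset α} (h : Par I s t) :
    Disjoint s t := by
  rw [Finset.disjoint_left]
  intro a ha hat
  exact hirr a (h a ha a hat)

lemma par_swap (hsymm : ∀ a b, I a b → I b a) {s t : Finset α} (h : Par I s t) :
    Par I t s := fun a ha b hb => hsymm _ _ (h b hb a ha)

lemma cliq_par {c s t : Finset α} (hc : IsCliq I c) (hs : s ⊆ c) (ht : t ⊆ c)
    (hdisj : Disjoint s t) : Par I s t := by
  intro a ha b hb
  exact hc a (hs ha) b (ht hb) (fun hab => (Finset.disjoint_left.mp hdisj) ha (hab ▸ hb))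

lemma ctr_sdiff {c d : Finset α} (h : c ⊆ d) (hd : IsCliq I d) :
    ctr I d = ctr I c * ctr I (d \ c) := by
  rw [← ctr_union (Finset.disjoint_sdiff) (by rwa [Finset.union_sdiff_of_subset h]),
    Finset.union_sdiff_of_subset h]

lemma ctr_comm_Pc {e : Finset α} {L : List (Finset α)} (h : ∀ c ∈ L, Par I e c) :
    ctr I e * Pc I L = Pc I L * ctr I e := by
  induction L with
  | nil => simp
  | cons c t ih =>
    rw [Pc_cons, ← mul_assoc, par_comm_ctr (h c (by simp)), mul_assoc,
      ih (fun x hx => h x (by simp [hx])), ← mul_assoc]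

lemma emb_comm_ctr {b : α} {g : Finset α} (hsymm : ∀ a b, I a b → I b a)
    (h : ∀ a ∈ g, I a b) : emb I b * ctr I g = ctr I g * emb I b := by
  have := par_comm_ctr (I := I) (s := g) (t := {b}) (by
    intro x hx y hy
    rw [Finset.mem_singleton] at hy
    subst hy; exact h x hx)
  simpa using this.symm

lemma emb_comm_Pc {b : α} {L : List (Finset α)} (hsymm : ∀ a b, I a b → I b a)
    (h : ∀ g ∈ L, ∀ a ∈ g, I a b) : emb I b * Pc I L = Pc I L * emb I b := by
  induction L with
  | nil => simp
  | cons c t ih =>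
    rw [Pc_cons, ← mul_assoc, emb_comm_ctr hsymm (h c (by simp)), mul_assoc,
      ih (fun x hx => h x (by simp [hx])), ← mul_assoc]

lemma sum_pow_neg_one (s : Finset α) :
    ∑ e ∈ s.powerset, (-1 : ℝ) ^ e.card = if s = ∅ then 1 else 0 := by
  have h1 : ∑ e ∈ s.powerset, (-1 : ℤ) ^ e.card = if s = ∅ then 1 else 0 :=
    Finset.sum_powerset_neg_one_pow_card
  have h2 : ((∑ e ∈ s.powerset, (-1 : ℤ) ^ e.card : ℤ) : ℝ)
      = ∑ e ∈ s.powerset, (-1 : ℝ) ^ e.card := by push_cast; rfl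
  rw [← h2, h1]
  split <;> simp

lemma neg_one_pow_sub {k m : ℕ} (h : k ≤ m) :
    (-1 : ℝ) ^ (m - k) = (-1) ^ m * (-1) ^ k := by
  have : (-1 : ℝ) ^ (m - k) * ((-1) ^ k * (-1) ^ k) = (-1) ^ m * (-1) ^ k := by
    rw [← mul_assoc, ← pow_add]
    rw [Nat.sub_add_cancel h]
  simpa [← pow_add] using this


section Fin
variable [Fintype α]

variable (I) in
/-- letters not blocked... actually: blocked letters w.r.t. optional guard -/
noncomputable def GBlk (g : Option (Finset α)) : Finset α :=
  Finset.univ.filter (fun b => ∀ d ∈ g, ∃ a ∈ d, ¬ I a b)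

@[simp] lemma mem_GBlk {g : Option (Finset α)} {b : α} :
    b ∈ GBlk I g ↔ ∀ d ∈ g, ∃ a ∈ d, ¬ I a b := by simp [GBlk]

@[simp] lemma GBlk_none : GBlk I (none : Option (Finset α)) = Finset.univ := by
  ext b; simp

variable (I) in
/-- condition on the extension `e` of a clique `c` -/
def ECond (g : Option (Finset α)) (c K : Finset α) (L : List (Finset α)) (e : Finset α) :
    Prop :=
  e ∩ c = ∅ ∧ IsCliq I (c ∪ e) ∧ (∀ c' ∈ L, Par I e c') ∧ Par I e K ∧ e ⊆ GBlk I g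

variable (I) in
noncomputable def V (F : TM I → ℝ) :
    List (Finset α) → Option (Finset α) → TM I → Finset α → TM I → ℝ
  | [], _, _, _, _ => 0
  | [c], g, p, K, t =>
      ∑ e : Finset α, if ECond I g c K [] e then
        ∑ c' : Finset α, if IsCliq I c' ∧ (c ∪ e) ⊆ c' ∧ Par I (c' \ (c ∪ e)) K then
          (-1 : ℝ) ^ (c'.card - (c ∪ e).card) * F (p * ctr I c' * t) else 0
      else 0
  | c :: c₂ :: L, g, p, K, t =>
      ∑ e : Finset α, if ECond I g c K (c₂ :: L) e then
        V F (c₂ :: L) (some (c ∪ e)) (p * ctr I (c ∪ e)) K t else 0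

lemma ite_sum_push {P : Prop} [Decidable P] {β : Type*} {s : Finset β} (f : β → ℝ) :
    (if P then ∑ x ∈ s, f x else 0) = ∑ x ∈ s, if P then f x else 0 := by
  split <;> simp

lemma ite_ite_merge {P Q : Prop} [Decidable P] [Decidable Q] (x : ℝ) :
    (if P then (if Q then x else 0) else 0) = if P ∧ Q then x else 0 := by
  by_cases P <;> by_cases Q <;> simp [*]

/-- Key evaluation of the singleton-list case of `V`. -/
lemma V_singleton_eval (F : TM I → ℝ) (g : Option (Finset α)) (p t : TM I)
    (c K : Finset α) :
    V I F [c] g p K t = ∑ r : Finset α,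
      if IsCliq I (c ∪ r) ∧ r ∩ c = ∅ ∧ Par I r K ∧ r ∩ GBlk I g = ∅ then
        (-1 : ℝ) ^ r.card * F (p * ctr I (c ∪ r) * t) else 0 := by
  classical
  have hV : V I F [c] g p K t = ∑ c' : Finset α, ∑ e : Finset α,
      if ECond I g c K [] e ∧ (IsCliq I c' ∧ (c ∪ e) ⊆ c' ∧ Par I (c' \ (c ∪ e)) K) then
        (-1 : ℝ) ^ (c'.card - (c ∪ e).card) * F (p * ctr I c' * t) else 0 := by
    show (∑ e : Finset α, _) = _
    rw [Finset.sum_comm]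
    refine Finset.sum_congr rfl (fun e _ => ?_)
    rw [ite_sum_push]
    refine Finset.sum_congr rfl (fun c' _ => ?_)
    rw [ite_ite_merge]
  rw [hV]
  -- restrict the outer sum to its support
  set P : Finset α → Prop := fun c' => IsCliq I c' ∧ c ⊆ c' ∧ Par I (c' \ c) K with hP
  set G : Finset α → ℝ := fun c' => ∑ e : Finset α,
      if ECond I g c K [] e ∧ (IsCliq I c' ∧ (c ∪ e) ⊆ c' ∧ Par I (c' \ (c ∪ e)) K) then
        (-1 : ℝ) ^ (c'.card - (c ∪ e).card) * F (p * ctr I c' * t) else 0 with hG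
  have hsupp : ∀ c' : Finset α, ¬ P c' → G c' = 0 := by
    intro c' hnc
    refine Finset.sum_eq_zero (fun e _ => ?_)
    rw [if_neg]
    rintro ⟨⟨he1, he2, _, he4, _⟩, hc1, hc2, hc3⟩
    refine hnc ⟨hc1, (Finset.union_subset_iff.mp hc2).1, ?_⟩
    intro x hx b hb
    rcases Finset.mem_sdiff.mp hx with ⟨hx1, hx2⟩
    by_cases hxe : x ∈ e
    · exact he4 x hxe b hb
    · exact hc3 x (Finset.mem_sdiff.mpr ⟨hx1, by
        simp only [Finset.mem_union, not_or]; exact ⟨hx2, hxe⟩⟩) b hb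
  have h1 : (∑ c' : Finset α, G c') = ∑ c' ∈ Finset.univ.filter P, G c' := by
    rw [Finset.sum_filter]
    refine Finset.sum_congr rfl (fun c' _ => ?_)
    by_cases h : P c'
    · rw [if_pos h]
    · rw [if_neg h, hsupp c' h]
  rw [h1]
  set P' : Finset α → Prop := fun r => IsCliq I (c ∪ r) ∧ r ∩ c = ∅ ∧ Par I r K with hP'
  have h2 : ∑ c' ∈ Finset.univ.filter P, G c' = ∑ r ∈ Finset.univ.filter P', G (c ∪ r) := by
    refine Finset.sum_nbij' (i := fun c' => c' \ c) (j := fun r => c ∪ r) ?_ ?_ ?_ ?_ ?_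
    · intro c' hc'
      obtain ⟨h1, h2, h3⟩ := (Finset.mem_filter.mp hc').2
      refine Finset.mem_filter.mpr ⟨Finset.mem_univ _, ?_, ?_, ?_⟩
      · rwa [Finset.union_sdiff_of_subset h2]
      · ext x; simp
      · exact h3
    · intro r hr
      obtain ⟨h1, h2, h3⟩ := (Finset.mem_filter.mp hr).2
      have hd : Disjoint r c := Finset.disjoint_iff_inter_eq_empty.mpr h2
      refine Finset.mem_filter.mpr ⟨Finset.mem_univ _, h1, Finset.subset_union_left, ?_⟩
      rwa [Finset.union_sdiff_cancel_left hd.symm]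
    · intro c' hc'
      obtain ⟨_, h2, _⟩ := (Finset.mem_filter.mp hc').2
      exact Finset.union_sdiff_of_subset h2
    · intro r hr
      obtain ⟨_, h2, _⟩ := (Finset.mem_filter.mp hr).2
      have hd : Disjoint r c := Finset.disjoint_iff_inter_eq_empty.mpr h2
      exact Finset.union_sdiff_cancel_left hd.symm
    · intro c' hc'
      obtain ⟨_, h2, _⟩ := (Finset.mem_filter.mp hc').2
      rw [Finset.union_sdiff_of_subset h2]
  rw [h2]
  have h3 : ∀ r ∈ Finset.univ.filter P', G (c ∪ r) =
      (if r ∩ GBlk I g = ∅ then (-1:ℝ)^r.card * F (p * ctr I (c ∪ r) * t) else 0) := by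
    intro r hr
    obtain ⟨hcliq, hrc, hrK⟩ := (Finset.mem_filter.mp hr).2
    have hd : Disjoint r c := Finset.disjoint_iff_inter_eq_empty.mpr hrc
    have hiff : ∀ e : Finset α,
        (ECond I g c K [] e ∧ (IsCliq I (c ∪ r) ∧ (c ∪ e) ⊆ (c ∪ r) ∧
          Par I ((c ∪ r) \ (c ∪ e)) K)) ↔ e ∈ (r ∩ GBlk I g).powerset := by
      intro e
      constructor
      · rintro ⟨⟨he1, _, _, _, he5⟩, _, hce, _⟩
        refine Finset.mem_powerset.mpr (Finset.subset_inter ?_ he5)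
        intro x hx
        have hx1 : x ∈ c ∪ r := hce (Finset.mem_union_right _ hx)
        rcases Finset.mem_union.mp hx1 with h | h
        · exact absurd (Finset.mem_inter.mpr ⟨hx, h⟩) (by rw [he1]; simp)
        · exact h
      · intro he
        have he' := Finset.mem_powerset.mp he
        have her : e ⊆ r := he'.trans Finset.inter_subset_left
        have heB : e ⊆ GBlk I g := he'.trans Finset.inter_subset_right
        have hec : e ∩ c = ∅ :=
          Finset.disjoint_iff_inter_eq_empty.mp (hd.mono_left her)
        refine ⟨⟨hec, cliq_subset hcliq (Finset.union_subset_union_right her), ?_, ?_, heB⟩,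
          hcliq, Finset.union_subset_union_right her, ?_⟩
        · intro c' hc'; simp at hc'
        · exact par_mono hrK her subset_rfl
        · refine par_mono hrK ?_ subset_rfl
          intro x hx
          rcases Finset.mem_sdiff.mp hx with ⟨h1, h2⟩
          rcases Finset.mem_union.mp h1 with h | h
          · exact absurd (Finset.mem_union_left _ h) h2
          · exact h
    have hGr : G (c ∪ r) = ∑ e ∈ (r ∩ GBlk I g).powerset,
        (-1:ℝ)^((c ∪ r).card - (c ∪ e).card) * F (p * ctr I (c ∪ r) * t) := by
      rw [hG]
      simp only []
      rw [show (∑ e : Finset α, if ECond I g c K [] e ∧ (IsCliq I (c ∪ r) ∧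
            (c ∪ e) ⊆ (c ∪ r) ∧ Par I ((c ∪ r) \ (c ∪ e)) K) then
            (-1:ℝ)^((c ∪ r).card - (c ∪ e).card) * F (p * ctr I (c ∪ r) * t) else 0)
          = ∑ e : Finset α, if e ∈ (r ∩ GBlk I g).powerset then
            (-1:ℝ)^((c ∪ r).card - (c ∪ e).card) * F (p * ctr I (c ∪ r) * t) else 0 from
        Finset.sum_congr rfl (fun e _ => if_congr (hiff e) rfl rfl)]
      rw [Finset.sum_ite_mem]
      congr 1
      simp
    rw [hGr]
    have hexp : ∀ e ∈ (r ∩ GBlk I g).powerset,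
        ((c ∪ r).card - (c ∪ e).card) = r.card - e.card := by
      intro e he
      have her : e ⊆ r := (Finset.mem_powerset.mp he).trans Finset.inter_subset_left
      have hde : Disjoint c e := (hd.symm).mono_right her
      rw [Finset.card_union_of_disjoint hd.symm, Finset.card_union_of_disjoint hde,
        Nat.add_sub_add_left]
    by_cases ht : r ∩ GBlk I g = ∅
    · rw [if_pos ht]
      rw [show r ∩ GBlk I g = ∅ from ht, Finset.powerset_empty, Finset.sum_singleton]
      have hcr : (c ∪ r).card - c.card = r.card := by
        rw [Finset.card_union_of_disjoint hd.symm]; omega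
      rw [Finset.union_empty, hcr]
    · rw [if_neg ht]
      rw [Finset.sum_congr rfl (fun e he => by rw [hexp e he]), ← Finset.sum_mul]
      have hz : (∑ e ∈ (r ∩ GBlk I g).powerset, (-1:ℝ)^(r.card - e.card)) = 0 := by
        have : ∀ e ∈ (r ∩ GBlk I g).powerset, (-1:ℝ)^(r.card - e.card)
            = (-1)^r.card * (-1)^e.card := by
          intro e he
          have her : e ⊆ r := (Finset.mem_powerset.mp he).trans Finset.inter_subset_left
          exact neg_one_pow_sub (Finset.card_le_card her)
        rw [Finset.sum_congr rfl this, ← Finset.mul_sum, sum_pow_neg_one, if_neg ht,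
          mul_zero]
      rw [hz, zero_mul]
  rw [Finset.sum_congr rfl h3, Finset.sum_filter]
  refine Finset.sum_congr rfl (fun r _ => ?_)
  rw [ite_ite_merge]
  refine if_congr ?_ rfl rfl
  first
  | tauto
  | (simp only [hP']; tauto)

lemma cliq_union (hsymm : ∀ a b, I a b → I b a) {s t : Finset α}
    (hs : IsCliq I s) (ht : IsCliq I t) (hst : Par I s t) : IsCliq I (s ∪ t) := by
  intro a ha b hb hab
  rcases Finset.mem_union.mp ha with ha | ha <;> rcases Finset.mem_union.mp hb with hb | hb
  · exact hs a ha b hb hab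
  · exact hst a ha b hb
  · exact hsymm _ _ (hst b hb a ha)
  · exact ht a ha b hb hab

lemma V_cons (F : TM I → ℝ) (c c₂ : Finset α) (L : List (Finset α)) (g : Option (Finset α))
    (p : TM I) (K : Finset α) (t : TM I) :
    V I F (c :: c₂ :: L) g p K t = ∑ e : Finset α, if ECond I g c K (c₂ :: L) e then
      V I F (c₂ :: L) (some (c ∪ e)) (p * ctr I (c ∪ e)) K t else 0 := rfl

lemma V_base (F : TM I → ℝ) (p t : TM I) (c K : Finset α) (hc : IsCliq I c) :
    V I F [c] none p K t = F (p * ctr I c * t) := by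
  rw [V_singleton_eval]
  rw [Finset.sum_eq_single (∅ : Finset α)]
  · rw [if_pos ⟨by simpa using hc, by simp, by simp, by simp⟩]
    simp
  · intro r _ hr
    rw [if_neg]
    rintro ⟨_, _, _, h4⟩
    simp only [GBlk_none, Finset.inter_univ] at h4
    exact hr h4
  · intro h; exact absurd (Finset.mem_univ _) h

lemma V_core (hsymm : ∀ a b, I a b → I b a) (hirr : ∀ a, ¬ I a a) (F : TM I → ℝ)
    (p t : TM I) (d ck K : Finset α) (hd : IsCliq I d) (hck : IsCliq I ck) :
    V I F [ck] (some d) (p * ctr I d) K t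
      = ∑ c'' : Finset α, if IsCliq I c'' ∧ d ⊆ c'' ∧ Par I (c'' \ d) (ck ∪ K) then
          (-1:ℝ)^(c''.card - d.card) * F (p * ctr I c'' * (ctr I ck * t)) else 0 := by
  rw [V_singleton_eval]
  have hblk : ∀ r : Finset α, r ∩ GBlk I (some d) = ∅ ↔ Par I d r := by
    intro r
    constructor
    · intro h a ha b hb
      by_contra hI
      have : b ∈ r ∩ GBlk I (some d) := Finset.mem_inter.mpr ⟨hb, by
        rw [mem_GBlk]
        rintro d' rfl1
        simp only [Option.mem_def, Option.some.injEq] at rfl1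
        subst rfl1
        exact ⟨a, ha, hI⟩⟩
      rw [h] at this; simp at this
    · intro h
      apply Finset.eq_empty_of_forall_notMem
      intro b hb
      rcases Finset.mem_inter.mp hb with ⟨h1, h2⟩
      rw [mem_GBlk] at h2
      obtain ⟨a, ha, hI⟩ := h2 d rfl
      exact hI (h a ha b h1)
  rw [← Finset.sum_filter, ← Finset.sum_filter]
  refine Finset.sum_nbij' (i := fun r => d ∪ r) (j := fun c'' => c'' \ d) ?_ ?_ ?_ ?_ ?_
  · intro r hr
    obtain ⟨h1, h2, h3, h4⟩ := (Finset.mem_filter.mp hr).2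
    have hpar : Par I d r := (hblk r).mp h4
    have hdisj : Disjoint d r := par_disjoint hirr hpar
    have hrcliq : IsCliq I r := cliq_subset h1 Finset.subset_union_right
    refine Finset.mem_filter.mpr ⟨Finset.mem_univ _, cliq_union hsymm hd hrcliq hpar,
      Finset.subset_union_left, ?_⟩
    rw [Finset.union_sdiff_cancel_left hdisj]
    refine par_union_right.mpr ⟨?_, h3⟩
    exact cliq_par h1 Finset.subset_union_right Finset.subset_union_left
      (Finset.disjoint_iff_inter_eq_empty.mpr h2)
  · intro c'' hc''
    obtain ⟨h1, h2, h3⟩ := (Finset.mem_filter.mp hc'').2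
    obtain ⟨h3a, h3b⟩ := par_union_right.mp h3
    have hrcliq : IsCliq I (c'' \ d) := cliq_subset h1 (Finset.sdiff_subset)
    have hpar : Par I d (c'' \ d) :=
      cliq_par h1 h2 Finset.sdiff_subset Finset.disjoint_sdiff
    refine Finset.mem_filter.mpr ⟨Finset.mem_univ _,
      cliq_union hsymm hck hrcliq (par_swap hsymm h3a), ?_, h3b, (hblk _).mpr hpar⟩
    exact Finset.disjoint_iff_inter_eq_empty.mp (par_disjoint hirr h3a).symm.symm
      |>.symm ▸ (Finset.disjoint_iff_inter_eq_empty.mp ((par_disjoint hirr h3a)))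
  · intro r hr
    obtain ⟨_, _, _, h4⟩ := (Finset.mem_filter.mp hr).2
    exact Finset.union_sdiff_cancel_left (par_disjoint hirr ((hblk r).mp h4))
  · intro c'' hc''
    obtain ⟨_, h2, _⟩ := (Finset.mem_filter.mp hc'').2
    exact Finset.union_sdiff_of_subset h2
  · intro r hr
    obtain ⟨h1, h2, h3, h4⟩ := (Finset.mem_filter.mp hr).2
    have hpar : Par I d r := (hblk r).mp h4
    have hdisj : Disjoint d r := par_disjoint hirr hpar
    have hdisj2 : Disjoint r ck :=
      Finset.disjoint_iff_inter_eq_empty.mpr h2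
    have hrcliq : IsCliq I r := cliq_subset h1 Finset.subset_union_right
    have e1 : (d ∪ r).card - d.card = r.card := by
      rw [Finset.card_union_of_disjoint hdisj]; omega
    have e2 : ctr I (ck ∪ r) = ctr I r * ctr I ck := by
      rw [Finset.union_comm, ctr_union hdisj2 (by rwa [Finset.union_comm])]
    have e3 : ctr I d * ctr I r = ctr I (d ∪ r) :=
      (ctr_union hdisj (cliq_union hsymm hd hrcliq hpar)).symm
    show (-1:ℝ)^r.card * F (p * ctr I d * ctr I (ck ∪ r) * t)
      = (-1:ℝ)^((d ∪ r).card - d.card) * F (p * ctr I (d ∪ r) * (ctr I ck * t))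
    rw [e1, e2, ← mul_assoc (p * ctr I d), mul_assoc p (ctr I d) (ctr I r), e3,
      mul_assoc (p * ctr I (d ∪ r)) (ctr I ck) t]

lemma ECond_shift (g : Option (Finset α)) (c K ck : Finset α) (L : List (Finset α))
    (e : Finset α) : ECond I g c K (L ++ [ck]) e ↔ ECond I g c (ck ∪ K) L e := by
  unfold ECond
  rw [par_union_right]
  constructor
  · rintro ⟨a, b, cc, dd, ee⟩
    exact ⟨a, b, fun c' hc' => cc c' (by simp [hc']), ⟨cc ck (by simp), dd⟩, ee⟩
  · rintro ⟨a, b, cc, ⟨d1, d2⟩, ee⟩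
    refine ⟨a, b, ?_, d2, ee⟩
    intro c' hc'
    rcases List.mem_append.mp hc' with h | h
    · exact cc c' h
    · simp at h; subst h; exact d1

lemma V_append (hsymm : ∀ a b, I a b → I b a) (hirr : ∀ a, ¬ I a a) (F : TM I → ℝ) :
    ∀ (L : List (Finset α)), L ≠ [] → ∀ (g : Option (Finset α)) (p : TM I)
      (K : Finset α) (t : TM I) (ck : Finset α), IsCliq I ck →
      V I F (L ++ [ck]) g p K t = V I F L g p (ck ∪ K) (ctr I ck * t) := by
  intro L
  induction L with
  | nil => intro h; exact absurd rfl h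
  | cons c L ih =>
    intro _ g p K t ck hck
    cases L with
    | nil =>
      show V I F (c :: [ck]) g p K t = _
      rw [V_cons]
      show _ = ∑ e : Finset α, _
      refine Finset.sum_congr rfl (fun e _ => ?_)
      by_cases he : ECond I g c K [ck] e
      · rw [if_pos he, if_pos ((ECond_shift g c K ck [] e).mp he)]
        exact V_core hsymm hirr F p t (c ∪ e) ck K he.2.1 hck
      · rw [if_neg he, if_neg (fun hh => he ((ECond_shift g c K ck [] e).mpr hh))]
    | cons c₂ L' =>
      show V I F (c :: ((c₂ :: L') ++ [ck])) g p K t = _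
      rw [show (c :: ((c₂ :: L') ++ [ck])) = c :: c₂ :: (L' ++ [ck]) from rfl, V_cons,
        V_cons]
      refine Finset.sum_congr rfl (fun e _ => ?_)
      by_cases he : ECond I g c K (c₂ :: (L' ++ [ck])) e
      · rw [if_pos he]
        have he' : ECond I g c (ck ∪ K) (c₂ :: L') e := by
          have := (ECond_shift g c K ck (c₂ :: L') e).mp (by
            simpa using he)
          exact this
        rw [if_pos he']
        exact ih (by simp) (some (c ∪ e)) (p * ctr I (c ∪ e)) K t ck hck
      · rw [if_neg he, if_neg (fun hh => he (by
          have := (ECond_shift g c K ck (c₂ :: L') e).mpr hh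
          simpa using this))]

lemma V_eval (hsymm : ∀ a b, I a b → I b a) (hirr : ∀ a, ¬ I a a) (F : TM I → ℝ)
    (L : List (Finset α)) :
    L ≠ [] → (∀ c ∈ L, IsCliq I c) → ∀ (p : TM I) (K : Finset α) (t : TM I),
      V I F L none p K t = F (p * Pc I L * t) := by
  induction L using List.reverseRecOn with
  | nil => intro h; exact absurd rfl h
  | append_singleton l ck ih =>
    intro _ hcl p K t
    have hck : IsCliq I ck := hcl ck (by simp)
    cases l with
    | nil =>
      simp only [List.nil_append]
      rw [V_base F p t ck K hck]
      simp [Pc]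
    | cons c l' =>
      rw [V_append hsymm hirr F (c :: l') (by simp) none p K t ck hck,
        ih (by simp) (fun x hx => hcl x (by
          simp only [List.cons_append, List.mem_cons, List.mem_append] at hx ⊢
          tauto)) p (ck ∪ K) (ctr I ck * t), Pc_append]
      congr 1
      simp [mul_assoc]

lemma GBlk_mono {d d' : Finset α} (h : d ⊆ d') : GBlk I (some d) ⊆ GBlk I (some d') := by
  intro b hb
  rw [mem_GBlk] at hb ⊢
  rintro x rfl1
  simp only [Option.mem_def, Option.some.injEq] at rfl1
  subst rfl1
  obtain ⟨a, ha, hI⟩ := hb d rfl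
  exact ⟨a, h ha, hI⟩

variable (I) in
def ExtP : List (Finset α) → List (Finset α) → Option (Finset α) → Prop
  | [], [], _ => True
  | d :: DL, c :: CL, g => c ⊆ d ∧ ECond I g c ∅ CL (d \ c) ∧ ExtP DL CL (some d)
  | _, _, _ => False

variable (I) in
noncomputable def TF : List (Finset α) → Option (Finset α) → Finset (List (Finset α))
  | [], _ => {[]}
  | c :: CL, g => (Finset.univ.filter (fun e => ECond I g c ∅ CL e)).biUnion
      (fun e => (TF CL (some (c ∪ e))).image (List.cons (c ∪ e)))

lemma mem_TF : ∀ (CL : List (Finset α)) (dl : List (Finset α)) (g : Option (Finset α)),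
    dl ∈ TF I CL g ↔ ExtP I dl CL g := by
  intro CL
  induction CL with
  | nil =>
    intro dl g
    cases dl with
    | nil => simp [TF, ExtP]
    | cons d DL => simp [TF, ExtP]
  | cons c CL ih =>
    intro dl g
    rw [TF, Finset.mem_biUnion]
    cases dl with
    | nil =>
      simp only [ExtP, iff_false]
      rintro ⟨e, _, hmem⟩
      rcases Finset.mem_image.mp hmem with ⟨dl', _, h⟩
      simp at h
    | cons d DL =>
      simp only [ExtP]
      constructor
      · rintro ⟨e, hef, hmem⟩
        obtain ⟨dl', hdl', heq⟩ := Finset.mem_image.mp hmem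
        obtain ⟨hd, hDL⟩ : (c ∪ e) = d ∧ dl' = DL := by
          constructor
          · exact (List.cons.injEq _ _ _ _ ▸ heq).1
          · exact (List.cons.injEq _ _ _ _ ▸ heq).2
        have hE : ECond I g c ∅ CL e := (Finset.mem_filter.mp hef).2
        have he : e ∩ c = ∅ := hE.1
        have hdisj : Disjoint c e := (Finset.disjoint_iff_inter_eq_empty.mpr he).symm
        have hdc : d \ c = e := by
          rw [← hd]
          exact Finset.union_sdiff_cancel_left hdisj
        refine ⟨?_, ?_, ?_⟩
        · rw [← hd]; exact Finset.subset_union_left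
        · rwa [hdc]
        · rw [← hDL] at *; rw [← hd]; rwa [ih dl' (some (c ∪ e))] at hdl'
      · rintro ⟨hsub, hE, hrec⟩
        refine ⟨d \ c, Finset.mem_filter.mpr ⟨Finset.mem_univ _, hE⟩, ?_⟩
        refine Finset.mem_image.mpr ⟨DL, ?_, ?_⟩
        · rw [ih DL (some (c ∪ (d \ c))), Finset.union_sdiff_of_subset hsub]
          exact hrec
        · rw [Finset.union_sdiff_of_subset hsub]

lemma ExtP_len : ∀ (cl dl : List (Finset α)) (g : Option (Finset α)),
    ExtP I dl cl g → dl.length = cl.length := by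
  intro cl
  induction cl with
  | nil => intro dl g h; cases dl with
    | nil => rfl
    | cons d DL => exact absurd h (by simp [ExtP])
  | cons c CL ih => intro dl g h; cases dl with
    | nil => exact absurd h (by simp [ExtP])
    | cons d DL =>
      obtain ⟨_, _, hrec⟩ := h
      simpa using ih DL (some d) hrec

lemma ExtP_refl : ∀ (cl : List (Finset α)) (g : Option (Finset α)),
    (∀ c ∈ cl, IsCliq I c) → ExtP I cl cl g := by
  intro cl
  induction cl with
  | nil => intro g _; trivial
  | cons c CL ih =>
    intro g hc
    refine ⟨subset_rfl, ?_, ih (some c) (fun x hx => hc x (by simp [hx]))⟩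
    refine ⟨by simp, by simpa using hc c (by simp), ?_, by simp, by simp⟩
    intro c' _; simp

lemma ExtP_valid : ∀ (cl dl : List (Finset α)) (g : Option (Finset α)),
    ExtP I dl cl g → (∀ c ∈ cl, c.Nonempty ∧ IsCliq I c) → cl.Chain' (CFadm I) →
    (∀ d ∈ dl, d.Nonempty ∧ IsCliq I d) ∧ dl.Chain' (CFadm I) ∧
      (∀ c₁ ∈ cl.head?, ∀ d₁ ∈ dl.head?, c₁ ⊆ d₁ ∧ ∀ b ∈ d₁ \ c₁, b ∈ GBlk I g) := by
  intro cl
  induction cl with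
  | nil =>
    intro dl g h _ _
    cases dl with
    | nil => exact ⟨by simp, List.isChain_nil, by simp⟩
    | cons d DL => exact absurd h (by simp [ExtP])
  | cons c CL ih =>
    intro dl g h hcl hchain
    cases dl with
    | nil => exact absurd h (by simp [ExtP])
    | cons d DL =>
      obtain ⟨hsub, hE, hrec⟩ := h
      have hdcliq : IsCliq I d := by
        have := hE.2.1
        rwa [Finset.union_sdiff_of_subset hsub] at this
      have IH := ih DL (some d) hrec (fun x hx => hcl x (by simp [hx])) hchain.tail
      refine ⟨?_, ?_, ?_⟩
      · intro x hx
        rcases List.mem_cons.mp hx with h | h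
        · subst h
          exact ⟨(hcl c (by simp)).1.mono hsub, hdcliq⟩
        · exact IH.1 x h
      · unfold List.Chain'; rw [List.isChain_cons]
        refine ⟨?_, IH.2.1⟩
        intro d₂ hd₂
        cases DL with
        | nil => simp at hd₂
        | cons dh DL' =>
          have hdh : dh = d₂ := by simpa using hd₂
          cases CL with
          | nil => exact absurd hrec (by simp [ExtP])
          | cons c₂ CL' =>
            have hc₂ : CFadm I c c₂ := (List.isChain_cons_cons.mp hchain).1
            have hhead := IH.2.2 c₂ (by simp) dh (by simp)
            intro b hb
            rw [← hdh] at hb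
            by_cases hbc : b ∈ c₂
            · obtain ⟨a, ha, hI⟩ := hc₂ b hbc
              exact ⟨a, hsub ha, hI⟩
            · have hB : b ∈ GBlk I (some d) := hhead.2 b (Finset.mem_sdiff.mpr ⟨hb, hbc⟩)
              rw [mem_GBlk] at hB
              exact hB d rfl
      · intro c₁ hc₁ d₁ hd₁
        simp only [List.head?_cons, Option.mem_def, Option.some.injEq] at hc₁ hd₁
        subst hc₁; subst hd₁
        exact ⟨hsub, fun b hb => hE.2.2.2.2 hb⟩

lemma ExtP_prefix : ∀ (cl dl : List (Finset α)) (g : Option (Finset α)),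
    ExtP I dl cl g → ∃ w, Pc I dl = Pc I cl * w := by
  intro cl
  induction cl with
  | nil =>
    intro dl g h
    cases dl with
    | nil => exact ⟨1, by simp⟩
    | cons d DL => exact absurd h (by simp [ExtP])
  | cons c CL ih =>
    intro dl g h
    cases dl with
    | nil => exact absurd h (by simp [ExtP])
    | cons d DL =>
      obtain ⟨hsub, hE, hrec⟩ := h
      have hdcliq : IsCliq I d := by
        have := hE.2.1
        rwa [Finset.union_sdiff_of_subset hsub] at this
      obtain ⟨w', hw'⟩ := ih DL (some d) hrec
      refine ⟨ctr I (d \ c) * w', ?_⟩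
      rw [Pc_cons, Pc_cons, hw', ctr_sdiff hsub hdcliq]
      rw [mul_assoc (ctr I c), ← mul_assoc (ctr I (d \ c)),
        ctr_comm_Pc (fun x hx => hE.2.2.1 x hx)]
      rw [← mul_assoc, ← mul_assoc, ← mul_assoc]

lemma cliq_insert (hsymm : ∀ a b, I a b → I b a) (hirr : ∀ a, ¬ I a a)
    {g : Finset α} {b : α} (hg : IsCliq I g) (hb : ∀ a ∈ g, I a b) :
    IsCliq I (insert b g) ∧ b ∉ g := by
  have hbg : b ∉ g := fun h => hirr b (hb b h)
  refine ⟨?_, hbg⟩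
  intro x hx y hy hxy
  rcases Finset.mem_insert.mp hx with hx1 | hx1
  · subst hx1
    rcases Finset.mem_insert.mp hy with hy1 | hy1
    · exact absurd hy1.symm hxy
    · exact hsymm _ _ (hb y hy1)
  · rcases Finset.mem_insert.mp hy with hy1 | hy1
    · subst hy1; exact hb x hx1
    · exact hg x hx1 y hy1 hxy

noncomputable def newpart (b : α) : List (Finset α) → List (Finset α)
  | [] => [{b}]
  | g :: l₂ => insert b g :: l₂

lemma CFadm_mono_left {c c' d : Finset α} (h : c ⊆ c') (hcd : CFadm I c d) :
    CFadm I c' d := by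
  intro b hb
  obtain ⟨a, ha, hI⟩ := hcd b hb
  exact ⟨a, h ha, hI⟩

lemma letter_step (hsymm : ∀ a b, I a b → I b a) (hirr : ∀ a, ¬ I a a)
    (l₁ l₂ : List (Finset α)) (b : α)
    (hval : ∀ c ∈ l₁ ++ l₂, c.Nonempty ∧ IsCliq I c)
    (hchain : (l₁ ++ l₂).Chain' (CFadm I))
    (h₂ : ∀ g ∈ l₂, ∀ a ∈ g, I a b)
    (h₁ : ∀ g, l₁.getLast? = some g → ∃ a ∈ g, ¬ I a b) :
    (∀ c ∈ l₁ ++ newpart b l₂, c.Nonempty ∧ IsCliq I c) ∧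
    (l₁ ++ newpart b l₂).Chain' (CFadm I) ∧
    Pc I (l₁ ++ newpart b l₂) = Pc I (l₁ ++ l₂) * emb I b ∧
    (l₁ ++ newpart b l₂).length = (l₁ ++ l₂).length + (if l₂ = [] then 1 else 0) := by
  obtain ⟨hch₁, hch₂, hlink⟩ := List.isChain_append.mp hchain
  refine ⟨?_, ?_, ?_, ?_⟩
  · intro x hx
    rcases List.mem_append.mp hx with h | h
    · exact hval x (List.mem_append.mpr (Or.inl h))
    · cases l₂ with
      | nil =>
        simp only [newpart, List.mem_singleton] at h
        subst h
        refine ⟨Finset.singleton_nonempty b, ?_⟩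
        intro x hx y hy hxy
        rw [Finset.mem_singleton] at hx hy
        exact absurd (hx.trans hy.symm) hxy
      | cons g l₂' =>
        simp only [newpart, List.mem_cons] at h
        rcases h with h | h
        · subst h
          have hg := hval g (by simp)
          exact ⟨Finset.insert_nonempty _ _,
            (cliq_insert hsymm hirr hg.2 (h₂ g (by simp))).1⟩
        · exact hval x (by simp [h])
  · unfold List.Chain'; rw [List.isChain_append]
    refine ⟨hch₁, ?_, ?_⟩
    · cases l₂ with
      | nil => simp [newpart]
      | cons g l₂' =>
        simp only [newpart]
        rw [List.isChain_cons] at hch₂ ⊢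
        exact ⟨fun y hy => CFadm_mono_left (Finset.subset_insert b g) (hch₂.1 y hy),
          hch₂.2⟩
    · intro x hx y hy
      cases l₂ with
      | nil =>
        simp only [newpart, List.head?_cons, Option.mem_def, Option.some.injEq] at hy
        subst hy
        intro z hz
        rw [Finset.mem_singleton] at hz
        subst hz
        exact h₁ x hx
      | cons g l₂' =>
        simp only [newpart, List.head?_cons, Option.mem_def, Option.some.injEq] at hy
        subst hy
        intro z hz
        rcases Finset.mem_insert.mp hz with rfl | hz
        · exact h₁ x hx
        · exact hlink x hx g (by simp) z hz
  · rw [Pc_append, Pc_append, mul_assoc]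
    congr 1
    cases l₂ with
    | nil => simp [newpart]
    | cons g l₂' =>
      simp only [newpart, Pc_cons]
      have hg := hval g (by simp)
      have hbg := cliq_insert hsymm hirr hg.2 (h₂ g (by simp))
      rw [ctr_insert hbg.2 hbg.1, emb_comm_ctr hsymm (h₂ g (by simp)), mul_assoc,
        emb_comm_Pc hsymm (fun g' hg' => h₂ g' (by simp [hg'])), ← mul_assoc]
  · cases l₂ with
    | nil => simp [newpart]
    | cons g l₂' => simp [newpart]

lemma split_exists : ∀ (l : List (Finset α)) (b : α), ∃ l₁ l₂,
    l = l₁ ++ l₂ ∧ (∀ g ∈ l₂, ∀ a ∈ g, I a b) ∧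
    ∀ g, l₁.getLast? = some g → ∃ a ∈ g, ¬ I a b := by
  intro l b
  induction l using List.reverseRecOn with
  | nil => exact ⟨[], [], rfl, by simp, by simp⟩
  | append_singleton l g ih =>
    by_cases hb : ∃ a ∈ g, ¬ I a b
    · refine ⟨l ++ [g], [], by simp, by simp, ?_⟩
      intro g' hg'
      rw [List.getLast?_concat] at hg'
      rw [show g' = g by simpa using hg'.symm]
      exact hb
    · push_neg at hb
      obtain ⟨l₁, l₂, rfl, hA, hB⟩ := ih
      refine ⟨l₁, l₂ ++ [g], by simp, ?_, hB⟩
      intro g' hg'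
      rcases List.mem_append.mp hg' with h | h
      · exact hA g' h
      · rw [show g' = g by simpa using h]
        exact hb

lemma mkTM_ofList : ∀ l : List α, mkTM I (FreeMonoid.ofList l) = PL I l := by
  intro l
  induction l with
  | nil => exact map_one (mkTM I)
  | cons a l ih =>
    rw [show FreeMonoid.ofList (a :: l) = FreeMonoid.of a * FreeMonoid.ofList l from rfl,
      map_mul, ih, PL_cons]
    rfl

lemma TM_surj (x : TM I) : ∃ l : List α, x = PL I l := by
  obtain ⟨w, rfl⟩ := Con.mk'_surjective (c := conGen (traceRel I)) x
  refine ⟨FreeMonoid.toList w, ?_⟩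
  rw [← mkTM_ofList]
  rfl

lemma ExtP_guard_mono : ∀ (cl dl : List (Finset α)) (d d' : Finset α),
    ExtP I dl cl (some d) → d ⊆ d' → ExtP I dl cl (some d') := by
  intro cl dl d d' h hdd
  cases cl with
  | nil => cases dl with
    | nil => trivial
    | cons x xs => exact absurd h (by simp [ExtP])
  | cons c CL => cases dl with
    | nil => exact absurd h (by simp [ExtP])
    | cons x xs =>
      obtain ⟨h1, h2, h3⟩ := h
      exact ⟨h1, ⟨h2.1, h2.2.1, h2.2.2.1, h2.2.2.2.1,
        h2.2.2.2.2.trans (GBlk_mono hdd)⟩, h3⟩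

lemma ExtP_sub_all {b : α} : ∀ (cl dl : List (Finset α)) (g : Option (Finset α)),
    ExtP I dl cl g → (∀ d ∈ dl, ∀ a ∈ d, I a b) → ∀ c ∈ cl, ∀ a ∈ c, I a b := by
  intro cl
  induction cl with
  | nil => intro dl g _ _ c hc; simp at hc
  | cons c CL ih =>
    intro dl g h hall x hx
    cases dl with
    | nil => exact absurd h (by simp [ExtP])
    | cons d DL =>
      obtain ⟨hsub, _, hrec⟩ := h
      rcases List.mem_cons.mp hx with rfl | hx
      · exact fun a ha => hall d (by simp) a (hsub ha)
      · exact ih DL (some d) hrec (fun d' hd' => hall d' (by simp [hd'])) x hx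

lemma ExtP_insert (hsymm : ∀ a b, I a b → I b a) (hirr : ∀ a, ¬ I a a) {b : α} :
    ∀ (l₁ cl : List (Finset α)) (g₀ : Option (Finset α)) (g : Finset α)
      (l₂ : List (Finset α)),
    ExtP I (l₁ ++ g :: l₂) cl g₀ →
    (∀ g' ∈ g :: l₂, ∀ a ∈ g', I a b) →
    (∀ d, (l₁.getLast? = some d ∨ (l₁ = [] ∧ g₀ = some d)) → ∃ a ∈ d, ¬ I a b) →
    ExtP I (l₁ ++ insert b g :: l₂) cl g₀ := by
  intro l₁
  induction l₁ with
  | nil =>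
    intro cl g₀ g l₂ h hg hblk
    cases cl with
    | nil => exact absurd h (by simp [ExtP])
    | cons c CL =>
      obtain ⟨hsub, hE, hrec⟩ := h
      have hgb : ∀ a ∈ g, I a b := hg g (by simp)
      have hcliqg : IsCliq I g := by
        have := hE.2.1; rwa [Finset.union_sdiff_of_subset hsub] at this
      obtain ⟨hcliq', hbg⟩ := cliq_insert hsymm hirr hcliqg hgb
      have hbc : b ∉ c := fun h => hbg (hsub h)
      have hsd : (insert b g) \ c = insert b (g \ c) := by
        ext x
        simp only [Finset.mem_sdiff, Finset.mem_insert]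
        constructor
        · rintro ⟨h1 | h1, h2⟩
          · exact Or.inl h1
          · exact Or.inr ⟨h1, h2⟩
        · rintro (rfl | ⟨h1, h2⟩)
          · exact ⟨Or.inl rfl, hbc⟩
          · exact ⟨Or.inr h1, h2⟩
      have hcup : c ∪ insert b (g \ c) = insert b g := by
        rw [Finset.union_insert, Finset.union_sdiff_of_subset hsub]
      refine ⟨hsub.trans (Finset.subset_insert _ _), ?_, ?_⟩
      · rw [hsd]
        obtain ⟨e1, e2, e3, e4, e5⟩ := hE
        refine ⟨?_, ?_, ?_, by simp, ?_⟩
        · apply Finset.eq_empty_of_forall_notMem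
          intro x hx
          rcases Finset.mem_inter.mp hx with ⟨h1, h2⟩
          rcases Finset.mem_insert.mp h1 with rfl | h1
          · exact hbc h2
          · exact absurd (Finset.mem_inter.mpr ⟨h1, h2⟩) (by rw [e1]; simp)
        · rwa [hcup]
        · intro c' hc' x hx y hy
          rcases Finset.mem_insert.mp hx with rfl | hx
          · exact hsymm _ _ (ExtP_sub_all CL l₂ (some g) hrec
              (fun d' hd' => hg d' (by simp [hd'])) c' hc' y hy)
          · exact e3 c' hc' x hx y hy
        · intro x hx
          rcases Finset.mem_insert.mp hx with rfl | hx
          · cases g₀ with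
            | none => simp
            | some d =>
              rw [mem_GBlk]
              rintro d' rfl1
              simp only [Option.mem_def, Option.some.injEq] at rfl1
              subst rfl1
              exact hblk d (Or.inr ⟨rfl, rfl⟩)
          · exact e5 hx
      · exact ExtP_guard_mono CL l₂ g (insert b g) hrec (Finset.subset_insert _ _)
  | cons d₁ l₁' ih =>
    intro cl g₀ g l₂ h hg hblk
    cases cl with
    | nil => exact absurd h (by simp [ExtP])
    | cons c CL =>
      obtain ⟨hsub, hE, hrec⟩ := h
      refine ⟨hsub, hE, ih CL (some d₁) g l₂ hrec hg ?_⟩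
      intro d hd
      rcases hd with hd | ⟨hnil, hd⟩
      · apply hblk d
        left
        cases l₁' with
        | nil => simp at hd
        | cons z zs => rw [List.getLast?_cons_cons]; exact hd
      · subst hnil
        have hd' : d = d₁ := by simpa using hd.symm
        subst hd'
        exact hblk d (Or.inl (by simp))

lemma getLast_eq_getLastD {β : Type*} (l : List β) (h : l ≠ []) (d : β) :
    l.getLast h = l.getLastD d := by
  rw [List.getLastD_eq_getLast?, List.getLast?_eq_getLast h]
  rfl

section CFPart

variable {cf : TM I → List (Finset α)}

lemma Pc_cf (hcf : ∀ u : TM I, (∀ c ∈ cf u, (c : Finset α).Nonempty ∧ IsCliq I c) ∧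
      (cf u).Chain' (CFadm I) ∧ ((cf u).map (ctr I)).prod = u) (y : TM I) :
    Pc I (cf y) = y := (hcf y).2.2

lemma cf_step (hsymm : ∀ a b, I a b → I b a) (hirr : ∀ a, ¬ I a a)
    (hcf : ∀ u : TM I, (∀ c ∈ cf u, (c : Finset α).Nonempty ∧ IsCliq I c) ∧
      (cf u).Chain' (CFadm I) ∧ ((cf u).map (ctr I)).prod = u)
    (hcfu : ∀ (u : TM I) (l : List (Finset α)),
      (∀ c ∈ l, (c : Finset α).Nonempty ∧ IsCliq I c) → l.Chain' (CFadm I) →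
      (l.map (ctr I)).prod = u → l = cf u)
    (y : TM I) (b : α) :
    (cf (y * emb I b)).length = (cf y).length + 1 ∨
    ∃ l₁ g l₂, cf y = l₁ ++ g :: l₂ ∧ cf (y * emb I b) = l₁ ++ insert b g :: l₂ ∧
      (∀ g' ∈ g :: l₂, ∀ a ∈ g', I a b) ∧
      (∀ g', l₁.getLast? = some g' → ∃ a ∈ g', ¬ I a b) := by
  obtain ⟨l₁, l₂, hsplit, h₂, h₁⟩ := split_exists (cf y) b
  obtain ⟨hcf1, hcf2, hcf3⟩ := hcf y
  rw [hsplit] at hcf1 hcf2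
  have hls := letter_step hsymm hirr l₁ l₂ b hcf1 hcf2 h₂ h₁
  have hprod : Pc I (l₁ ++ newpart b l₂) = y * emb I b := by
    rw [hls.2.2.1, ← hsplit]
    show ((cf y).map (ctr I)).prod * emb I b = _
    rw [hcf3]
  have hcfnew : l₁ ++ newpart b l₂ = cf (y * emb I b) :=
    hcfu _ _ hls.1 hls.2.1 hprod
  cases l₂ with
  | nil =>
    left
    rw [← hcfnew, hsplit]
    simpa using hls.2.2.2
  | cons g l₂' =>
    right
    exact ⟨l₁, g, l₂', hsplit, hcfnew.symm, h₂, h₁⟩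

lemma cf_mono_letter (hsymm : ∀ a b, I a b → I b a) (hirr : ∀ a, ¬ I a a)
    (hcf : ∀ u : TM I, (∀ c ∈ cf u, (c : Finset α).Nonempty ∧ IsCliq I c) ∧
      (cf u).Chain' (CFadm I) ∧ ((cf u).map (ctr I)).prod = u)
    (hcfu : ∀ (u : TM I) (l : List (Finset α)),
      (∀ c ∈ l, (c : Finset α).Nonempty ∧ IsCliq I c) → l.Chain' (CFadm I) →
      (l.map (ctr I)).prod = u → l = cf u)
    (y : TM I) (b : α) : (cf y).length ≤ (cf (y * emb I b)).length := by
  rcases cf_step hsymm hirr hcf hcfu y b with h | ⟨l₁, g, l₂, h1, h2, _, _⟩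
  · omega
  · rw [h1, h2]; simp

lemma cf_mono_list (hsymm : ∀ a b, I a b → I b a) (hirr : ∀ a, ¬ I a a)
    (hcf : ∀ u : TM I, (∀ c ∈ cf u, (c : Finset α).Nonempty ∧ IsCliq I c) ∧
      (cf u).Chain' (CFadm I) ∧ ((cf u).map (ctr I)).prod = u)
    (hcfu : ∀ (u : TM I) (l : List (Finset α)),
      (∀ c ∈ l, (c : Finset α).Nonempty ∧ IsCliq I c) → l.Chain' (CFadm I) →
      (l.map (ctr I)).prod = u → l = cf u) :
    ∀ (l : List α) (y : TM I), (cf y).length ≤ (cf (y * PL I l)).length := by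
  intro l
  induction l with
  | nil => intro y; simp
  | cons b l ih =>
    intro y
    have h1 := cf_mono_letter hsymm hirr hcf hcfu y b
    have h2 := ih (y * emb I b)
    rw [PL_cons, ← mul_assoc]
    omega

lemma cf_ext_step (hsymm : ∀ a b, I a b → I b a) (hirr : ∀ a, ¬ I a a)
    (hcf : ∀ u : TM I, (∀ c ∈ cf u, (c : Finset α).Nonempty ∧ IsCliq I c) ∧
      (cf u).Chain' (CFadm I) ∧ ((cf u).map (ctr I)).prod = u)
    (hcfu : ∀ (u : TM I) (l : List (Finset α)),
      (∀ c ∈ l, (c : Finset α).Nonempty ∧ IsCliq I c) → l.Chain' (CFadm I) →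
      (l.map (ctr I)).prod = u → l = cf u)
    (y : TM I) (b : α) (cl : List (Finset α))
    (hext : ExtP I (cf y) cl none)
    (hlen : (cf (y * emb I b)).length = (cf y).length) :
    ExtP I (cf (y * emb I b)) cl none := by
  rcases cf_step hsymm hirr hcf hcfu y b with h | ⟨l₁, g, l₂, h1, h2, hg, hblk⟩
  · omega
  · rw [h2]
    rw [h1] at hext
    refine ExtP_insert hsymm hirr l₁ cl none g l₂ hext hg ?_
    intro d hd
    rcases hd with hd | ⟨_, hd⟩
    · exact hblk d hd
    · simp at hd

lemma cf_ext_all (hsymm : ∀ a b, I a b → I b a) (hirr : ∀ a, ¬ I a a)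
    (hcf : ∀ u : TM I, (∀ c ∈ cf u, (c : Finset α).Nonempty ∧ IsCliq I c) ∧
      (cf u).Chain' (CFadm I) ∧ ((cf u).map (ctr I)).prod = u)
    (hcfu : ∀ (u : TM I) (l : List (Finset α)),
      (∀ c ∈ l, (c : Finset α).Nonempty ∧ IsCliq I c) → l.Chain' (CFadm I) →
      (l.map (ctr I)).prod = u → l = cf u) :
    ∀ (l : List α) (y : TM I) (cl : List (Finset α)),
    ExtP I (cf y) cl none → (cf (y * PL I l)).length = (cf y).length →
    ExtP I (cf (y * PL I l)) cl none := by
  intro l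
  induction l with
  | nil => intro y cl h hl; simpa using h
  | cons b l ih =>
    intro y cl h hl
    rw [PL_cons, ← mul_assoc] at hl ⊢
    have h1 := cf_mono_letter hsymm hirr hcf hcfu y b
    have h2 := cf_mono_list hsymm hirr hcf hcfu l (y * emb I b)
    have heq : (cf (y * emb I b)).length = (cf y).length := by omega
    exact ih (y * emb I b) cl (cf_ext_step hsymm hirr hcf hcfu y b cl h heq)
      (by omega)

end CFPart

variable (I) in
noncomputable def LeafH [Fintype α] (F : TM I → ℝ) (p : TM I) (dl : List (Finset α)) : ℝ :=
  ∑ c' : Finset α, if IsCliq I c' ∧ dl.getLastD ∅ ⊆ c' then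
    (-1:ℝ)^(c'.card - (dl.getLastD ∅).card) * F (p * Pc I dl.dropLast * ctr I c') else 0

lemma sum_TF [Fintype α] (F : TM I → ℝ) :
    ∀ (CL : List (Finset α)), CL ≠ [] → ∀ (g : Option (Finset α)) (p : TM I),
    ∑ dl ∈ TF I CL g, LeafH I F p dl = V I F CL g p ∅ 1 := by
  intro CL
  induction CL with
  | nil => intro h; exact absurd rfl h
  | cons c CL ih =>
    intro _ g p
    rw [TF, Finset.sum_biUnion (by
      intro e₁ h₁ e₂ h₂ hne
      rw [Function.onFun]
      rw [Finset.disjoint_left]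
      intro dl hdl₁ hdl₂
      obtain ⟨x₁, _, hx₁⟩ := Finset.mem_image.mp hdl₁
      obtain ⟨x₂, _, hx₂⟩ := Finset.mem_image.mp hdl₂
      have hE₁ : ECond I g c ∅ CL e₁ := (Finset.mem_filter.mp h₁).2
      have hE₂ : ECond I g c ∅ CL e₂ := (Finset.mem_filter.mp h₂).2
      have : c ∪ e₁ = c ∪ e₂ := by
        have := hx₁.trans hx₂.symm
        exact (List.cons.injEq _ _ _ _ ▸ this).1
      apply hne
      have hd₁ : Disjoint c e₁ := (Finset.disjoint_iff_inter_eq_empty.mpr hE₁.1).symm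
      have hd₂ : Disjoint c e₂ := (Finset.disjoint_iff_inter_eq_empty.mpr hE₂.1).symm
      rw [← Finset.union_sdiff_cancel_left hd₁, ← Finset.union_sdiff_cancel_left hd₂, this])]
    have himg : ∀ e ∈ Finset.univ.filter (fun e => ECond I g c ∅ CL e),
        ∑ dl ∈ (TF I CL (some (c ∪ e))).image (List.cons (c ∪ e)), LeafH I F p dl
          = ∑ dl' ∈ TF I CL (some (c ∪ e)), LeafH I F p ((c ∪ e) :: dl') :=
      fun e _ => Finset.sum_image (fun x _ y _ h => (List.cons.injEq _ _ _ _ ▸ h).2)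
    rw [Finset.sum_congr rfl himg]
    cases CL with
    | nil =>
      rw [show (TF I [] : Option (Finset α) → Finset (List (Finset α)))
        = fun _ => {[]} from rfl]
      show _ = V I F [c] g p ∅ 1
      show _ = ∑ e : Finset α, _
      rw [Finset.sum_filter]
      refine Finset.sum_congr rfl (fun e _ => ?_)
      by_cases hE : ECond I g c ∅ [] e
      · rw [if_pos hE, if_pos hE, Finset.sum_singleton]
        unfold LeafH
        refine Finset.sum_congr rfl (fun c' _ => ?_)
        refine if_congr ?_ ?_ rfl
        · simp
        · simp only [List.getLastD_cons, List.getLastD_nil, List.dropLast_singleton,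
            Pc_nil, mul_one, one_mul]
      · rw [if_neg hE, if_neg hE]
    | cons c₂ CL' =>
      rw [V_cons, Finset.sum_filter]
      refine Finset.sum_congr rfl (fun e _ => ?_)
      by_cases hE : ECond I g c ∅ (c₂ :: CL') e
      · rw [if_pos hE, if_pos hE, ← ih (by simp) (some (c ∪ e)) (p * ctr I (c ∪ e))]
        refine Finset.sum_congr rfl (fun dl' hdl' => ?_)
        have hext := (mem_TF (c₂ :: CL') dl' (some (c ∪ e))).mp hdl'
        have hlen := ExtP_len (c₂ :: CL') dl' (some (c ∪ e)) hext
        have hdlne : dl' ≠ [] := by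
          intro h; rw [h] at hlen; simp at hlen
        cases dl' with
        | nil => exact absurd rfl hdlne
        | cons dh dl'' =>
          unfold LeafH
          refine Finset.sum_congr rfl (fun c' _ => ?_)
          have h1 : ((c ∪ e) :: dh :: dl'').getLastD ∅ = (dh :: dl'').getLastD ∅ := by
            simp [List.getLastD_cons]
          have h2 : ((c ∪ e) :: dh :: dl'').dropLast = (c ∪ e) :: (dh :: dl'').dropLast := rfl
          rw [h1, h2, Pc_cons, ← mul_assoc p (ctr I (c ∪ e)) (Pc I (dh :: dl'').dropLast)]
      · rw [if_neg hE, if_neg hE]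

end Fin
end MobAux

open MobAux

/-- Graded Möbius inversion for trace monoids: if `cf` assigns to each trace its
(unique) Cartier–Foata decomposition, `H` is the graded Möbius transform of `F`,
then `F(u) = ∑_{x ∈ M(u)} H(x)`, where `M(u)` is the set of traces of the same
height as `u` admitting `u` as a prefix (and `M(0)` is the set of cliques). -/
theorem graded_mobius_inversion {α : Type*} [Fintype α] (I : α → α → Prop)
    (hsymm : ∀ a b, I a b → I b a) (hirr : ∀ a, ¬ I a a)
    (cf : TM I → List (Finset α))
    (hcf : ∀ u : TM I, (∀ c ∈ cf u, (c : Finset α).Nonempty ∧ IsCliq I c) ∧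
      (cf u).Chain' (CFadm I) ∧ ((cf u).map (ctr I)).prod = u)
    (hcfu : ∀ (u : TM I) (l : List (Finset α)),
      (∀ c ∈ l, (c : Finset α).Nonempty ∧ IsCliq I c) → l.Chain' (CFadm I) →
      (l.map (ctr I)).prod = u → l = cf u)
    (F H : TM I → ℝ)
    (hH1 : H 1 = ∑ c : Finset α, if IsCliq I c then (-1 : ℝ) ^ c.card * F (ctr I c) else 0)
    (hH : ∀ (u : TM I) (hne : cf u ≠ []),
      H u = ∑ c' : Finset α,
        if IsCliq I c' ∧ (cf u).getLast hne ⊆ c' then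
          (-1 : ℝ) ^ (c'.card - ((cf u).getLast hne).card) *
            F ((((cf u).dropLast).map (ctr I)).prod * ctr I c')
        else 0) :
    (∀ u : TM I, u ≠ 1 →
      ∀ hfin : {x : TM I | (cf x).length = (cf u).length ∧ pref I u x}.Finite,
        F u = ∑ x ∈ hfin.toFinset, H x) ∧
    (F 1 = ∑ c : Finset α, if IsCliq I c then H (ctr I c) else 0) := by
  constructor
  · intro u hu hfin
    have hne : cf u ≠ [] := by
      intro h
      apply hu
      have := (hcf u).2.2
      rw [h] at this
      simpa using this.symm
    have himg : hfin.toFinset = (TF I (cf u) none).image (Pc I) := by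
      ext x
      rw [Set.Finite.mem_toFinset, Finset.mem_image]
      constructor
      · rintro ⟨hlen, hpref⟩
        obtain ⟨w, rfl⟩ := hpref
        obtain ⟨wl, rfl⟩ := TM_surj w
        have hstart : ExtP I (cf u) (cf u) none :=
          ExtP_refl (cf u) none (fun c hc => ((hcf u).1 c hc).2)
        have hext := cf_ext_all hsymm hirr hcf hcfu wl u (cf u) hstart hlen
        exact ⟨cf (u * PL I wl), (mem_TF _ _ _).mpr hext, (hcf _).2.2⟩
      · rintro ⟨dl, hdl, rfl⟩
        have hext := (mem_TF _ _ _).mp hdl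
        have hvalid := ExtP_valid (cf u) dl none hext (hcf u).1 (hcf u).2.1
        have hcfdl : dl = cf (Pc I dl) := hcfu _ dl hvalid.1 hvalid.2.1 rfl
        refine ⟨?_, ?_⟩
        · rw [← hcfdl]
          exact ExtP_len (cf u) dl none hext
        · obtain ⟨w, hw⟩ := ExtP_prefix (cf u) dl none hext
          exact ⟨w, by rw [hw, Pc_cf hcf u]⟩
    have hinj : ∀ x ∈ TF I (cf u) none, ∀ y ∈ TF I (cf u) none,
        Pc I x = Pc I y → x = y := by
      intro a ha b hb hab
      have hva := ExtP_valid (cf u) a none ((mem_TF _ _ _).mp ha) (hcf u).1 (hcf u).2.1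
      have hvb := ExtP_valid (cf u) b none ((mem_TF _ _ _).mp hb) (hcf u).1 (hcf u).2.1
      have hab' : (List.map (ctr I) a).prod = (List.map (ctr I) b).prod := hab
      rw [hcfu _ a hva.1 hva.2.1 rfl, hcfu _ b hvb.1 hvb.2.1 rfl, hab']
    rw [himg, Finset.sum_image hinj]
    have hH' : ∀ dl ∈ TF I (cf u) none, H (Pc I dl) = LeafH I F 1 dl := by
      intro dl hdl
      have hext := (mem_TF _ _ _).mp hdl
      have hvalid := ExtP_valid (cf u) dl none hext (hcf u).1 (hcf u).2.1
      have hcfdl : dl = cf (Pc I dl) := hcfu _ dl hvalid.1 hvalid.2.1 rfl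
      have hdlne : dl ≠ [] := by
        have hl := ExtP_len (cf u) dl none hext
        intro h
        rw [h] at hl
        exact hne (List.length_eq_zero_iff.mp hl.symm)
      have hne2 : cf (Pc I dl) ≠ [] := by rw [← hcfdl]; exact hdlne
      rw [hH _ hne2]
      unfold LeafH
      refine Finset.sum_congr rfl (fun c' _ => ?_)
      have hgl : (cf (Pc I dl)).getLast hne2 = dl.getLastD ∅ := by
        rw [getLast_eq_getLastD _ _ ∅, ← hcfdl]
      have hdrop : (cf (Pc I dl)).dropLast = dl.dropLast := by rw [← hcfdl]
      rw [hgl, hdrop, one_mul]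
      rfl
    rw [Finset.sum_congr rfl hH', sum_TF F (cf u) hne none 1,
      V_eval hsymm hirr F (cf u) hne (fun c hc => ((hcf u).1 c hc).2) 1 ∅ 1,
      one_mul, mul_one, Pc_cf hcf u]
  · have cfctr : ∀ c : Finset α, c.Nonempty → IsCliq I c → cf (ctr I c) = [c] := by
      intro c hcne hc
      refine (hcfu (ctr I c) [c] ?_ ?_ ?_).symm
      · intro x hx
        rw [List.mem_singleton] at hx
        subst hx
        exact ⟨hcne, hc⟩
      · exact List.isChain_singleton _
      · simp
    have hHc : ∀ c : Finset α, IsCliq I c → H (ctr I c) =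
        ∑ c' : Finset α, if IsCliq I c' ∧ c ⊆ c' then
          (-1:ℝ)^(c'.card - c.card) * F (ctr I c') else 0 := by
      intro c hc
      rcases Finset.eq_empty_or_nonempty c with rfl | hcne
      · rw [ctr_empty, hH1]
        refine Finset.sum_congr rfl (fun c' _ => ?_)
        refine if_congr (by simp) (by simp) rfl
      · have hcc := cfctr c hcne hc
        have hne' : cf (ctr I c) ≠ [] := by rw [hcc]; simp
        rw [hH (ctr I c) hne']
        refine Finset.sum_congr rfl (fun c' _ => ?_)
        have hgl : (cf (ctr I c)).getLast hne' = c := by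
          rw [getLast_eq_getLastD _ _ ∅, hcc]
          rfl
        have hdrop : (cf (ctr I c)).dropLast = [] := by rw [hcc]; rfl
        rw [hgl, hdrop]
        refine if_congr Iff.rfl ?_ rfl
        rw [show (List.map (ctr I) []).prod * ctr I c' = ctr I c' by simp]
    have key : ∀ c' : Finset α, (∑ c : Finset α, if IsCliq I c ∧ IsCliq I c' ∧ c ⊆ c' then
        (-1:ℝ)^(c'.card - c.card) * F (ctr I c') else 0)
        = if IsCliq I c' ∧ c' = ∅ then F (ctr I c') else 0 := by
      intro c'
      by_cases hcq : IsCliq I c'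
      · have hiff : ∀ c : Finset α, (IsCliq I c ∧ IsCliq I c' ∧ c ⊆ c') ↔ c ∈ c'.powerset := by
          intro c
          rw [Finset.mem_powerset]
          exact ⟨fun h => h.2.2, fun h => ⟨cliq_subset hcq h, hcq, h⟩⟩
        rw [Finset.sum_congr rfl (fun c _ => if_congr (hiff c) rfl rfl),
          Finset.sum_ite_mem, Finset.univ_inter]
        by_cases hcemp : c' = ∅
        · subst hcemp
          rw [if_pos ⟨hcq, rfl⟩, Finset.powerset_empty, Finset.sum_singleton]
          simp
        · rw [if_neg (fun h => hcemp h.2), ← Finset.sum_mul]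
          have hz : (∑ c ∈ c'.powerset, (-1:ℝ)^(c'.card - c.card)) = 0 := by
            rw [Finset.sum_congr rfl (fun c hcm =>
              neg_one_pow_sub (Finset.card_le_card (Finset.mem_powerset.mp hcm))),
              ← Finset.mul_sum, sum_pow_neg_one, if_neg hcemp, mul_zero]
          rw [hz, zero_mul]
      · rw [if_neg (fun h => hcq h.1)]
        refine Finset.sum_eq_zero (fun c _ => ?_)
        rw [if_neg (fun h => hcq h.2.1)]
    have main : (∑ c : Finset α, if IsCliq I c then H (ctr I c) else 0) = F 1 := by
      have step1 : (∑ c : Finset α, if IsCliq I c then H (ctr I c) else 0)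
          = ∑ c : Finset α, ∑ c' : Finset α, if IsCliq I c ∧ IsCliq I c' ∧ c ⊆ c' then
            (-1:ℝ)^(c'.card - c.card) * F (ctr I c') else 0 := by
        refine Finset.sum_congr rfl (fun c _ => ?_)
        by_cases hc : IsCliq I c
        · rw [if_pos hc, hHc c hc]
          refine Finset.sum_congr rfl (fun c' _ => ?_)
          refine if_congr ?_ rfl rfl
          constructor
          · intro h; exact ⟨hc, h⟩
          · intro h; exact h.2
        · rw [if_neg hc]
          rw [eq_comm]
          refine Finset.sum_eq_zero (fun c' _ => ?_)
          rw [if_neg (fun h => hc h.1)]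
      rw [step1, Finset.sum_comm, Finset.sum_congr rfl (fun c' _ => key c'),
        Finset.sum_eq_single (∅ : Finset α)]
      · rw [if_pos ⟨by intro a ha; simp at ha, rfl⟩, ctr_empty]
      · intro c' _ hc'
        rw [if_neg (fun h => hc' h.2)]
      · intro h
        exact absurd (Finset.mem_univ _) h
    exact main.symm
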